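/- In the example self-similar groupoid action (G,E) generated by the partial isomorphisms a, b, c, the restriction of powers of a⁻¹cba along the edge e₁ satisfies (a⁻¹cba)^{2k}|_{e₁} = (a⁻¹cba)^k for every integer k ≥ 1. -/

import Mathlib

attribute [local instance] Classical.propDecidable

/-- A directed graph `E = (E⁰, E¹, r, s)`. -/
structure DGraph where
  V : Type
  Edge : Type
  r : Edge → V
  s : Edge → V

/-- `E.chain v l w` says that the list of edges `l` forms a path with range `v`
and source `w`: consecutive edges satisfy `r e_{i+1} = s e_i`. -/
def DGraph.chain (E : DGraph) : E.V → List E.Edge → E.V → Prop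
  | v, [], w => v = w
  | v, e :: l, w => E.r e = v ∧ E.chain (E.s e) l w

theorem DGraph.chain_append (E : DGraph) :
    ∀ (l₁ : List E.Edge) (v w x : E.V) (l₂ : List E.Edge),
      E.chain v l₁ w → E.chain w l₂ x → E.chain v (l₁ ++ l₂) x := by
  intro l₁
  induction l₁ with
  | nil =>
      intro v w x l₂ h1 h2
      have hvw : v = w := h1
      rw [List.nil_append]
      exact hvw ▸ h2
  | cons e l ih =>
      intro v w x l₂ h1 h2
      have h1' : E.r e = v ∧ E.chain (E.s e) l w := h1
      exact ⟨h1'.1, ih _ _ _ _ h1'.2 h2⟩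

/-- A finite path in the graph `E`: a range vertex `r μ`, a compatible list of
edges, and a source vertex `s μ`.  Vertices are the paths with no edges. -/
structure Pth (E : DGraph) where
  rng : E.V
  edges : List E.Edge
  src : E.V
  ok : E.chain rng edges src

/-- The length-zero path at a vertex `v`. -/
def Pth.ofVertex {E : DGraph} (v : E.V) : Pth E := ⟨v, [], v, rfl⟩

/-- The length-one path given by an edge `e`. -/
def Pth.ofEdge {E : DGraph} (e : E.Edge) : Pth E :=
  ⟨E.r e, [e], E.s e, ⟨rfl, rfl⟩⟩

/-- Concatenation `μ ν` of paths (meaningful when `r ν = s μ`; junk otherwise). -/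
noncomputable def Pth.concat {E : DGraph} (μ ν : Pth E) : Pth E :=
  if h : ν.rng = μ.src then
    ⟨μ.rng, μ.edges ++ ν.edges, ν.src,
      E.chain_append μ.edges μ.rng μ.src ν.src ν.edges μ.ok (h ▸ ν.ok)⟩
  else μ

/-- A (discrete) groupoid with unit space `V`: `d` and `t` are the domain and
terminus maps, `unit v = id_v`, and a pair `(g, h)` is composable when `d g = t h`. -/
structure VGroupoid (V : Type) (α : Type*) where
  d : α → V
  t : α → V
  mul : α → α → α
  inv : α → α
  unit : V → α
  d_unit : ∀ v, d (unit v) = v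
  t_unit : ∀ v, t (unit v) = v
  d_inv : ∀ g, d (inv g) = t g
  t_inv : ∀ g, t (inv g) = d g
  d_mul : ∀ g h, d g = t h → d (mul g h) = d h
  t_mul : ∀ g h, d g = t h → t (mul g h) = t g
  mul_assoc : ∀ g h k, d g = t h → d h = t k → mul (mul g h) k = mul g (mul h k)
  unit_mul : ∀ g, mul (unit (t g)) g = g
  mul_unit : ∀ g, mul g (unit (d g)) = g
  inv_mul : ∀ g, mul (inv g) g = unit (d g)
  mul_inv : ∀ g, mul g (inv g) = unit (t g)
  inv_inv : ∀ g, inv (inv g) = g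

/-- A self-similar groupoid action `(G, E)` on the path space of the graph `E`:
a groupoid `G` with unit space `E⁰` together with a faithful action by partial
isomorphisms of the forest `T_E` — each `g ∈ G` maps `d(g) E*` bijectively onto
`t(g) E*` preserving path length, sending vertices to vertices and preserving the
edge relation of `T_E` — such that for every `g ∈ G` and every edge
`e ∈ d(g) E¹` there is a unique restriction `g|_e ∈ G` with
`g · (e μ) = (g · e)(g|_e · μ)` for all `μ ∈ s(e) E*`. -/
structure SelfSimilar (E : DGraph) (α : Type*) extends VGroupoid E.V α where
  act : α → Pth E → Pth E
  act_rng : ∀ g μ, μ.rng = d g → (act g μ).rng = t g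
  act_len : ∀ g μ, μ.rng = d g → (act g μ).edges.length = μ.edges.length
  act_vertex : ∀ g, act g (Pth.ofVertex (d g)) = Pth.ofVertex (t g)
  act_mul : ∀ g h μ, d g = t h → μ.rng = d h → act (mul g h) μ = act g (act h μ)
  act_unit : ∀ v μ, μ.rng = v → act (unit v) μ = μ
  act_surj : ∀ g ν, ν.rng = t g → ∃ μ, μ.rng = d g ∧ act g μ = ν
  act_edge : ∀ g μ e, μ.rng = d g → E.r e = μ.src →
      ∃ e' : E.Edge, act g (μ.concat (Pth.ofEdge e)) = (act g μ).concat (Pth.ofEdge e')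
  faithful : ∀ g₁ g₂, d g₁ = d g₂ → (∀ μ, μ.rng = d g₁ → act g₁ μ = act g₂ μ) → g₁ = g₂
  res : α → E.Edge → α
  res_d : ∀ g e, E.r e = d g → d (res g e) = E.s e
  res_spec : ∀ g e μ, E.r e = d g → μ.rng = E.s e →
      act g ((Pth.ofEdge e).concat μ) = (act g (Pth.ofEdge e)).concat (act (res g e) μ)
  res_unique : ∀ g e k, E.r e = d g → d k = E.s e →
      (∀ μ, μ.rng = E.s e →
        act g ((Pth.ofEdge e).concat μ) = (act g (Pth.ofEdge e)).concat (act k μ)) →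
      k = res g e

/-- The example graph: vertices `u = 0`, `v = 1`, `w = 2` and edges
`e₁ = 0, …, e₆ = 5` with `r e₁ = s e₁ = u`; `r e₂ = v`, `s e₂ = u`; `r e₃ = u`,
`s e₃ = v`; `r e₄ = r e₅ = w`, `s e₄ = s e₅ = v`; `r e₆ = v`, `s e₆ = w`. -/
abbrev exGraph : DGraph where
  V := Fin 3
  Edge := Fin 6
  r := ![0, 1, 0, 2, 2, 1]
  s := ![0, 0, 1, 1, 1, 2]

/-- Iterated product `z^n` (with respect to a multiplication `mulf` and an
identity element `e`): `z^0 = e`, `z^{n+1} = z · z^n`. -/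
def gpow {α : Type*} (mulf : α → α → α) (e z : α) : ℕ → α
  | 0 => e
  | n + 1 => mulf z (gpow mulf e z n)


lemma Pth.ext' {E : DGraph} {p q : Pth E} (h1 : p.rng = q.rng)
    (h2 : p.edges = q.edges) (h3 : p.src = q.src) : p = q := by
  cases p; cases q; simp_all

lemma concat_vertex {E : DGraph} (μ : Pth E) :
    μ.concat (Pth.ofVertex μ.src) = μ := by
  unfold Pth.concat
  rw [dif_pos (show (Pth.ofVertex μ.src).rng = μ.src from rfl)]
  exact Pth.ext' rfl (by simp [Pth.ofVertex]) rfl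

lemma concat_vertex' {E : DGraph} (μ : Pth E) (v : E.V) (h : v = μ.src) :
    μ.concat (Pth.ofVertex v) = μ := by subst h; exact concat_vertex μ

lemma concat_rng {E : DGraph} (μ ν : Pth E) (h : ν.rng = μ.src) :
    (μ.concat ν).rng = μ.rng := by unfold Pth.concat; rw [dif_pos h]

section General
variable {E : DGraph} {α : Type*} (S : SelfSimilar E α)

lemma SS.act_inv_act (g : α) (μ : Pth E) (h : μ.rng = S.d g) :
    S.act (S.inv g) (S.act g μ) = μ := by
  rw [← S.act_mul (S.inv g) g μ (S.d_inv g) h, S.inv_mul, S.act_unit _ _ h]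

lemma SS.res_unit (v : E.V) (e : E.Edge) (he : E.r e = v) :
    S.res (S.unit v) e = S.unit (E.s e) := by
  refine (S.res_unique (S.unit v) e (S.unit (E.s e)) (by rw [S.d_unit]; exact he)
    (S.d_unit _) ?_).symm
  intro μ hμ
  rw [S.act_unit _ _ (by rw [concat_rng _ _ hμ]; exact he),
    S.act_unit _ _ (show (Pth.ofEdge e).rng = v from he),
    S.act_unit _ _ hμ]

lemma SS.res_mul (g h : α) (e e' : E.Edge) (hgh : S.d g = S.t h)
    (he : E.r e = S.d h)
    (hact : S.act h (Pth.ofEdge e) = Pth.ofEdge e')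
    (ht : S.t (S.res h e) = E.s e') :
    S.res (S.mul g h) e = S.mul (S.res g e') (S.res h e) := by
  have hre' : E.r e' = S.d g := by
    have h1 := S.act_rng h (Pth.ofEdge e) he
    rw [hact] at h1
    exact h1.trans hgh.symm
  have hdg' : S.d (S.res g e') = S.t (S.res h e) := by
    rw [S.res_d g e' hre', ht]
  refine (S.res_unique (S.mul g h) e _ (by rw [S.d_mul g h hgh]; exact he)
    (by rw [S.d_mul _ _ hdg', S.res_d h e he]) ?_).symm
  intro μ hμ
  have hX : ((Pth.ofEdge e).concat μ).rng = S.d h := by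
    rw [concat_rng _ _ hμ]; exact he
  have hν : (S.act (S.res h e) μ).rng = E.s e' := by
    rw [S.act_rng _ _ (by rw [S.res_d h e he]; exact hμ)]; exact ht
  rw [S.act_mul g h _ hgh hX, S.res_spec h e μ he hμ, hact,
    S.res_spec g e' _ hre' hν,
    S.act_mul g h _ hgh (show (Pth.ofEdge e).rng = S.d h from he), hact,
    S.act_mul _ _ μ hdg' (by rw [S.res_d h e he]; exact hμ)]

lemma SS.res_inv (g : α) (e e' : E.Edge) (he : E.r e = S.d g)
    (hact : S.act g (Pth.ofEdge e) = Pth.ofEdge e')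
    (ht : S.t (S.res g e) = E.s e') :
    S.res (S.inv g) e' = S.inv (S.res g e) := by
  have hre' : E.r e' = S.t g := by
    have h1 := S.act_rng g (Pth.ofEdge e) he
    rw [hact] at h1; exact h1
  refine (S.res_unique (S.inv g) e' _ (by rw [S.d_inv]; exact hre')
    (by rw [S.d_inv]; exact ht) ?_).symm
  intro μ hμ
  obtain ⟨ν, hν, hν2⟩ := S.act_surj (S.res g e) μ (by rw [ht]; exact hμ)
  have hν' : ν.rng = E.s e := by rw [hν, S.res_d g e he]
  have key : (Pth.ofEdge e').concat μ = S.act g ((Pth.ofEdge e).concat ν) := by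
    rw [S.res_spec g e ν he hν', hact, hν2]
  rw [key, SS.act_inv_act S g _ (by rw [concat_rng _ _ hν']; exact he),
    ← hact, SS.act_inv_act S g _ (show (Pth.ofEdge e).rng = S.d g from he),
    ← hν2, SS.act_inv_act S _ _ hν]

lemma SS.inv_unit (v : E.V) : S.inv (S.unit v) = S.unit v := by
  have h1 : S.mul (S.unit v) (S.inv (S.unit v)) = S.unit v := by
    rw [S.mul_inv, S.t_unit]
  have h2 := S.unit_mul (S.inv (S.unit v))
  rw [S.t_inv, S.d_unit] at h2
  rw [← h2, h1]

end General

/-- In the example self-similar groupoid action `(G, E)` generated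
by the partial isomorphisms `a, b, c`, the restriction of powers of `a⁻¹cba` along
the edge `e₁` satisfies `(a⁻¹cba)^{2k}|_{e₁} = (a⁻¹cba)^k` for every `k ≥ 1`. -/
theorem example_power_restriction {α : Type*}
    (S : SelfSimilar exGraph α) (a b c : α)
    (hda : S.d a = 0) (hta : S.t a = 1) (hdb : S.d b = 1) (htb : S.t b = 2)
    (hdc : S.d c = 2) (htc : S.t c = 1)
    (ha1 : ∀ μ : Pth exGraph, μ.rng = 0 →
        S.act a ((Pth.ofEdge (E := exGraph) 0).concat μ) =
          (Pth.ofEdge (E := exGraph) 1).concat μ)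
    (ha3 : ∀ μ : Pth exGraph, μ.rng = 1 →
        S.act a ((Pth.ofEdge (E := exGraph) 2).concat μ) =
          (Pth.ofEdge (E := exGraph) 5).concat (S.act b μ))
    (hb2 : ∀ μ : Pth exGraph, μ.rng = 0 →
        S.act b ((Pth.ofEdge (E := exGraph) 1).concat μ) =
          (Pth.ofEdge (E := exGraph) 4).concat (S.act a μ))
    (hb6 : ∀ μ : Pth exGraph, μ.rng = 2 →
        S.act b ((Pth.ofEdge (E := exGraph) 5).concat μ) =
          (Pth.ofEdge (E := exGraph) 3).concat (S.act c μ))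
    (hc4 : ∀ μ : Pth exGraph, μ.rng = 1 →
        S.act c ((Pth.ofEdge (E := exGraph) 3).concat μ) =
          (Pth.ofEdge (E := exGraph) 1).concat (S.act (S.inv a) μ))
    (hc5 : ∀ μ : Pth exGraph, μ.rng = 1 →
        S.act c ((Pth.ofEdge (E := exGraph) 4).concat μ) =
          (Pth.ofEdge (E := exGraph) 5).concat (S.act b μ))
    (hra1 : S.res a 0 = S.unit 0) (hra3 : S.res a 2 = b)
    (hrb2 : S.res b 1 = a) (hrb6 : S.res b 5 = c)
    (hrc4 : S.res c 3 = S.inv a) (hrc5 : S.res c 4 = b)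
    :
    ∀ k : ℕ, 1 ≤ k →
      S.res (gpow S.mul (S.unit 0) (S.mul (S.inv a) (S.mul c (S.mul b a))) (2 * k)) 0 =
        gpow S.mul (S.unit 0) (S.mul (S.inv a) (S.mul c (S.mul b a))) k := by
  -- notation
  set z : α := S.mul (S.inv a) (S.mul c (S.mul b a)) with hz
  -- basic groupoid arithmetic
  have hdai : S.d (S.inv a) = 1 := by rw [S.d_inv, hta]
  have htai : S.t (S.inv a) = 0 := by rw [S.t_inv, hda]
  have hcba : S.d b = S.t a := by rw [hdb, hta]
  have hdba : S.d (S.mul b a) = 0 := by rw [S.d_mul b a hcba, hda]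
  have htba : S.t (S.mul b a) = 2 := by rw [S.t_mul b a hcba, htb]
  have hccba : S.d c = S.t (S.mul b a) := by rw [hdc, htba]
  have hdcba : S.d (S.mul c (S.mul b a)) = 0 := by rw [S.d_mul _ _ hccba, hdba]
  have htcba : S.t (S.mul c (S.mul b a)) = 1 := by rw [S.t_mul _ _ hccba, htc]
  have hacba : S.d (S.inv a) = S.t (S.mul c (S.mul b a)) := by rw [hdai, htcba]
  have hdz : S.d z = 0 := by rw [hz, S.d_mul _ _ hacba, hdcba]
  have htz : S.t z = 0 := by rw [hz, S.t_mul _ _ hacba, htai]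
  have hccb : S.d c = S.t b := by rw [hdc, htb]
  have hdcb : S.d (S.mul c b) = 1 := by rw [S.d_mul _ _ hccb, hdb]
  have htcb : S.t (S.mul c b) = 1 := by rw [S.t_mul _ _ hccb, htc]
  have hacb : S.d (S.inv a) = S.t (S.mul c b) := by rw [hdai, htcb]
  have hdh : S.d (S.mul (S.inv a) (S.mul c b)) = 1 := by rw [S.d_mul _ _ hacb, hdcb]
  have hth : S.t (S.mul (S.inv a) (S.mul c b)) = 0 := by rw [S.t_mul _ _ hacb, htai]
  -- vertex actions
  have hav : S.act a (Pth.ofVertex 0) = Pth.ofVertex 1 := by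
    have h := S.act_vertex a; rwa [hda, hta] at h
  have hbv : S.act b (Pth.ofVertex 1) = Pth.ofVertex (E := exGraph) 2 := by
    have h := S.act_vertex b; rwa [hdb, htb] at h
  have hcv : S.act c (Pth.ofVertex 2) = Pth.ofVertex 1 := by
    have h := S.act_vertex c; rwa [hdc, htc] at h
  have haiv : S.act (S.inv a) (Pth.ofVertex 1) = Pth.ofVertex (E := exGraph) 0 := by
    have h := S.act_vertex (S.inv a); rwa [hdai, htai] at h
  -- single-edge actions
  have hA0 : S.act a (Pth.ofEdge (E := exGraph) 0) = Pth.ofEdge (E := exGraph) 1 := by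
    have h := ha1 (Pth.ofVertex 0) rfl
    rwa [concat_vertex' (Pth.ofEdge (E := exGraph) 0) 0 rfl,
      concat_vertex' (Pth.ofEdge (E := exGraph) 1) 0 rfl] at h
  have hA2 : S.act a (Pth.ofEdge (E := exGraph) 2) = Pth.ofEdge (E := exGraph) 5 := by
    have h := ha3 (Pth.ofVertex 1) rfl
    rwa [concat_vertex' (Pth.ofEdge (E := exGraph) 2) 1 rfl, hbv,
      concat_vertex' (Pth.ofEdge (E := exGraph) 5) 2 rfl] at h
  have hB1 : S.act b (Pth.ofEdge (E := exGraph) 1) = Pth.ofEdge (E := exGraph) 4 := by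
    have h := hb2 (Pth.ofVertex 0) rfl
    rwa [concat_vertex' (Pth.ofEdge (E := exGraph) 1) 0 rfl, hav,
      concat_vertex' (Pth.ofEdge (E := exGraph) 4) 1 rfl] at h
  have hB5 : S.act b (Pth.ofEdge (E := exGraph) 5) = Pth.ofEdge (E := exGraph) 3 := by
    have h := hb6 (Pth.ofVertex 2) rfl
    rwa [concat_vertex' (Pth.ofEdge (E := exGraph) 5) 2 rfl, hcv,
      concat_vertex' (Pth.ofEdge (E := exGraph) 3) 1 rfl] at h
  have hC3 : S.act c (Pth.ofEdge (E := exGraph) 3) = Pth.ofEdge (E := exGraph) 1 := by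
    have h := hc4 (Pth.ofVertex 1) rfl
    rwa [concat_vertex' (Pth.ofEdge (E := exGraph) 3) 1 rfl, haiv,
      concat_vertex' (Pth.ofEdge (E := exGraph) 1) 0 rfl] at h
  have hC4 : S.act c (Pth.ofEdge (E := exGraph) 4) = Pth.ofEdge (E := exGraph) 5 := by
    have h := hc5 (Pth.ofVertex 1) rfl
    rwa [concat_vertex' (Pth.ofEdge (E := exGraph) 4) 1 rfl, hbv,
      concat_vertex' (Pth.ofEdge (E := exGraph) 5) 2 rfl] at h
  have hAi5 : S.act (S.inv a) (Pth.ofEdge (E := exGraph) 5) = Pth.ofEdge (E := exGraph) 2 := by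
    rw [← hA2]; exact SS.act_inv_act S a _ (by rw [hda]; rfl)
  have hAi1 : S.act (S.inv a) (Pth.ofEdge (E := exGraph) 1) = Pth.ofEdge (E := exGraph) 0 := by
    rw [← hA0]; exact SS.act_inv_act S a _ (by rw [hda]; rfl)
  -- product actions on edges
  have hBA0 : S.act (S.mul b a) (Pth.ofEdge (E := exGraph) 0) = Pth.ofEdge (E := exGraph) 4 := by
    rw [S.act_mul b a _ hcba (by rw [hda]; rfl), hA0, hB1]
  have hCBA0 : S.act (S.mul c (S.mul b a)) (Pth.ofEdge (E := exGraph) 0)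
      = Pth.ofEdge (E := exGraph) 5 := by
    rw [S.act_mul c _ _ hccba (by rw [hdba]; rfl), hBA0, hC4]
  have hZ0 : S.act z (Pth.ofEdge (E := exGraph) 0) = Pth.ofEdge (E := exGraph) 2 := by
    rw [hz, S.act_mul _ _ _ hacba (by rw [hdcba]; rfl), hCBA0, hAi5]
  have hBA2 : S.act (S.mul b a) (Pth.ofEdge (E := exGraph) 2) = Pth.ofEdge (E := exGraph) 3 := by
    rw [S.act_mul b a _ hcba (by rw [hda]; rfl), hA2, hB5]
  have hCBA2 : S.act (S.mul c (S.mul b a)) (Pth.ofEdge (E := exGraph) 2)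
      = Pth.ofEdge (E := exGraph) 1 := by
    rw [S.act_mul c _ _ hccba (by rw [hdba]; rfl), hBA2, hC3]
  have hZ2 : S.act z (Pth.ofEdge (E := exGraph) 2) = Pth.ofEdge (E := exGraph) 0 := by
    rw [hz, S.act_mul _ _ _ hacba (by rw [hdcba]; rfl), hCBA2, hAi1]
  -- restrictions of generators' inverses
  have hrAi5 : S.res (S.inv a) 5 = S.inv b := by
    rw [SS.res_inv S a 2 5 (by rw [hda]; rfl) hA2 (by rw [hra3, htb]; rfl), hra3]
  have hrAi1 : S.res (S.inv a) 1 = S.unit 0 := by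
    rw [SS.res_inv S a 0 1 (by rw [hda]; rfl) hA0 (by rw [hra1, S.t_unit]; rfl), hra1,
      SS.inv_unit]
  -- restrictions of products along e1 = edge 0
  have hrBA0 : S.res (S.mul b a) 0 = a := by
    rw [SS.res_mul S b a 0 1 hcba (by rw [hda]; rfl) hA0 (by rw [hra1, S.t_unit]; rfl),
      hrb2, hra1, ← hda, S.mul_unit]
  have hrCBA0 : S.res (S.mul c (S.mul b a)) 0 = S.mul b a := by
    rw [SS.res_mul S c (S.mul b a) 0 4 hccba (by rw [hdba]; rfl) hBA0
      (by rw [hrBA0, hta]; rfl), hrc5, hrBA0]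
  have hrZ0 : S.res z 0 = a := by
    rw [hz, SS.res_mul S (S.inv a) (S.mul c (S.mul b a)) 0 5 hacba (by rw [hdcba]; rfl)
      hCBA0 (by rw [hrCBA0, htba]; rfl), hrAi5, hrCBA0,
      ← S.mul_assoc (S.inv b) b a (by rw [S.d_inv]) hcba, S.inv_mul, hdb, ← hta,
      S.unit_mul]
  -- restrictions of products along e3 = edge 2
  have hrBA2 : S.res (S.mul b a) 2 = S.mul c b := by
    rw [SS.res_mul S b a 2 5 hcba (by rw [hda]; rfl) hA2 (by rw [hra3, htb]; rfl),
      hrb6, hra3]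
  have hrCBA2 : S.res (S.mul c (S.mul b a)) 2 = S.mul (S.inv a) (S.mul c b) := by
    rw [SS.res_mul S c (S.mul b a) 2 3 hccba (by rw [hdba]; rfl) hBA2
      (by rw [hrBA2, htcb]; rfl), hrc4, hrBA2]
  have hrZ2 : S.res z 2 = S.mul (S.inv a) (S.mul c b) := by
    rw [hz, SS.res_mul S (S.inv a) (S.mul c (S.mul b a)) 2 1 hacba (by rw [hdcba]; rfl)
      hCBA2 (by rw [hrCBA2, hth]; rfl), hrAi1, hrCBA2, ← hth, S.unit_mul]
  -- key identity: (a⁻¹cb)·a = z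
  have hkey : S.mul (S.mul (S.inv a) (S.mul c b)) a = z := by
    rw [S.mul_assoc (S.inv a) (S.mul c b) a hacb (by rw [S.d_mul _ _ hccb, hdb, hta]),
      S.mul_assoc c b a hccb hcba, hz]
  -- d and t of powers
  have hgp : ∀ n : ℕ, S.d (gpow S.mul (S.unit 0) z n) = 0 ∧
      S.t (gpow S.mul (S.unit 0) z n) = 0 := by
    intro n
    induction n with
    | zero => exact ⟨S.d_unit 0, S.t_unit 0⟩
    | succ n ih =>
        have hc : S.d z = S.t (gpow S.mul (S.unit 0) z n) := by rw [hdz, ih.2]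
        exact ⟨by rw [gpow, S.d_mul _ _ hc, ih.1], by rw [gpow, S.t_mul _ _ hc, htz]⟩
  -- main induction
  have main : ∀ k : ℕ,
      S.res (gpow S.mul (S.unit 0) z (2 * k)) 0 = gpow S.mul (S.unit 0) z k ∧
      S.act (gpow S.mul (S.unit 0) z (2 * k)) (Pth.ofEdge (E := exGraph) 0)
        = Pth.ofEdge (E := exGraph) 0 := by
    intro k
    induction k with
    | zero =>
        refine ⟨?_, ?_⟩
        · show S.res (S.unit 0) 0 = S.unit 0
          exact SS.res_unit S 0 0 rfl
        · show S.act (S.unit 0) (Pth.ofEdge (E := exGraph) 0) = _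
          exact S.act_unit 0 _ rfl
    | succ k ih =>
        have h2 : 2 * (k + 1) = (2 * k) + 1 + 1 := by ring
        rw [h2]
        set X := gpow S.mul (S.unit 0) z (2 * k) with hX
        have hcomp1 : S.d z = S.t X := by rw [hdz, (hgp (2 * k)).2]
        have hdzX : S.d (S.mul z X) = 0 := by rw [S.d_mul _ _ hcomp1, (hgp (2 * k)).1]
        have htzX : S.t (S.mul z X) = 0 := by rw [S.t_mul _ _ hcomp1, htz]
        have hcomp2 : S.d z = S.t (S.mul z X) := by rw [hdz, htzX]
        have hactZX : S.act (S.mul z X) (Pth.ofEdge (E := exGraph) 0)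
            = Pth.ofEdge (E := exGraph) 2 := by
          rw [S.act_mul z X _ hcomp1 (by rw [(hgp (2 * k)).1]; rfl), ih.2, hZ0]
        have hresZX : S.res (S.mul z X) 0 = S.mul a (gpow S.mul (S.unit 0) z k) := by
          rw [SS.res_mul S z X 0 0 hcomp1 (by rw [(hgp (2 * k)).1]; rfl) ih.2
            (by rw [ih.1, (hgp k).2]; rfl), hrZ0, ih.1]
        refine ⟨?_, ?_⟩
        · show S.res (S.mul z (S.mul z X)) 0 = S.mul z (gpow S.mul (S.unit 0) z k)
          rw [SS.res_mul S z (S.mul z X) 0 2 hcomp2 (by rw [hdzX]; rfl) hactZX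
            (by rw [hresZX, S.t_mul a _ (by rw [hda, (hgp k).2]), hta]; rfl),
            hrZ2, hresZX,
            ← S.mul_assoc (S.mul (S.inv a) (S.mul c b)) a _ (by rw [hdh, hta])
              (by rw [hda, (hgp k).2]), hkey]
        · show S.act (S.mul z (S.mul z X)) (Pth.ofEdge (E := exGraph) 0) = _
          rw [S.act_mul z (S.mul z X) _ hcomp2 (by rw [hdzX]; rfl), hactZX, hZ2]
  intro k _
  exact (main k).1
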